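/- arXiv:2201.08498 — 2 statements merged into one kernel-verified Lean document; each statement's English description precedes it below -/
import Mathlib

section
/- For every even n ≥ 4, the cycle C_n admits a unit grid intersection representation; and no odd cycle admits a unit grid intersection representation. -/
open Set

/-- The closed horizontal unit segment with left endpoint `p`. -/
def hseg (p : ℝ × ℝ) : Set (ℝ × ℝ) := {q | q.2 = p.2 ∧ q.1 ∈ Set.Icc p.1 (p.1 + 1)}

/-- The closed vertical unit segment with bottom endpoint `p`. -/
def vseg (p : ℝ × ℝ) : Set (ℝ × ℝ) := {q | q.1 = p.1 ∧ q.2 ∈ Set.Icc p.2 (p.2 + 1)}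

/-- The unit axis-parallel segment with endpoint `p`, horizontal if `h = true`. -/
def useg (h : Bool) (p : ℝ × ℝ) : Set (ℝ × ℝ) := if h then hseg p else vseg p

/-- A unit grid intersection representation of a graph `G`: every vertex is assigned a
unit axis-parallel segment, segments of the same orientation are pairwise disjoint, and
two distinct vertices are adjacent iff their segments intersect. -/
structure UGIGRep {V : Type*} (G : SimpleGraph V) where
  horiz : V → Bool
  base : V → ℝ × ℝ
  same_disj : ∀ u v : V, u ≠ v → horiz u = horiz v →
    Disjoint (useg (horiz u) (base u)) (useg (horiz v) (base v))
  adj_iff : ∀ u v : V, u ≠ v →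
    (G.Adj u v ↔ (useg (horiz u) (base u) ∩ useg (horiz v) (base v)).Nonempty)

/-- A graph is a unit grid intersection graph if it has a UGIG representation. -/
def IsUGIG {V : Type*} (G : SimpleGraph V) : Prop := Nonempty (UGIGRep G)

/-! ### Auxiliary lemmas -/

open Fin.NatCast

lemma useg_true (p : ℝ × ℝ) : useg true p = hseg p := rfl
lemma useg_false (p : ℝ × ℝ) : useg false p = vseg p := rfl

lemma hseg_vseg_inter (p q : ℝ × ℝ) :
    (hseg p ∩ vseg q).Nonempty ↔ p.1 ≤ q.1 ∧ q.1 ≤ p.1 + 1 ∧ q.2 ≤ p.2 ∧ p.2 ≤ q.2 + 1 := by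
  constructor
  · rintro ⟨z, ⟨hz2, hz1a, hz1b⟩, hw1, hw2a, hw2b⟩
    rw [hz2] at hw2a hw2b
    rw [hw1] at hz1a hz1b
    exact ⟨hz1a, hz1b, hw2a, hw2b⟩
  · rintro ⟨h1, h2, h3, h4⟩
    exact ⟨(q.1, p.2), ⟨rfl, h1, h2⟩, rfl, h3, h4⟩

lemma hseg_disj {p q : ℝ × ℝ} (h : p.2 ≠ q.2) : Disjoint (hseg p) (hseg q) := by
  rw [Set.disjoint_left]
  rintro z ⟨hz, -⟩ ⟨hz', -⟩
  exact h (hz ▸ hz')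

lemma vseg_disj {p q : ℝ × ℝ} (h : p.1 ≠ q.1) : Disjoint (vseg p) (vseg q) := by
  rw [Set.disjoint_left]
  rintro z ⟨hz, -⟩ ⟨hz', -⟩
  exact h (hz ▸ hz')

lemma mod_eq_one_iff {n t : ℕ} (h2 : 2 ≤ n) (ht : t < 2*n) : t % n = 1 ↔ t = 1 ∨ t = n + 1 := by
  constructor
  · intro h
    have hd := Nat.div_add_mod t n
    have hq : t / n < 2 := Nat.div_lt_of_lt_mul (by omega)
    interval_cases h' : t / n <;> omega
  · rintro (rfl | rfl)
    · exact Nat.mod_eq_of_lt (by omega)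
    · rw [Nat.add_mod_left]; exact Nat.mod_eq_of_lt (by omega)

lemma fin_sub_val_one {n : ℕ} (hn : 2 ≤ n) (a b : Fin n) :
    (a - b).val = 1 ↔ (b.val + 1 = a.val ∨ (a.val = 0 ∧ b.val = n - 1)) := by
  rw [Fin.sub_def]
  have ha := a.isLt
  have hb := b.isLt
  simp only []
  rw [mod_eq_one_iff hn (by omega)]
  omega

lemma cycle_adj_char {n : ℕ} (hn : 2 ≤ n) (u v : Fin n) :
    (SimpleGraph.cycleGraph n).Adj u v ↔
      (u.val + 1 = v.val ∨ v.val + 1 = u.val ∨ (u.val = 0 ∧ v.val = n - 1) ∨ (v.val = 0 ∧ u.val = n - 1)) := by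
  rw [SimpleGraph.cycleGraph_adj', fin_sub_val_one hn, fin_sub_val_one hn]
  tauto

/-- Horizontal segments of the representation of `C_{2m}`. -/
noncomputable def Hbase (m j : ℕ) : ℝ × ℝ :=
  (((j:ℝ)-1)/m, if j = 0 then 0 else 1-((j:ℝ)-1)/m)

/-- Vertical segments of the representation of `C_{2m}`. -/
noncomputable def Vbase (m k : ℕ) : ℝ × ℝ :=
  if k = 0 then (0,0)
  else if k = m-1 then (1-1/(m:ℝ), -((m:ℝ)-2)/m)
  else (((k:ℝ)-1)/m + 1, 1-(k:ℝ)/m)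
lemma Hy_ne {m j j' : ℕ} (hm : 2 ≤ m) (hj : j < m) (hj' : j' < m) (h : j ≠ j') :
    (Hbase m j).2 ≠ (Hbase m j').2 := by
  have hM : (2:ℝ) ≤ (m:ℝ) := by exact_mod_cast hm
  have hJ : (j:ℝ) ≤ (m:ℝ) - 1 := by
    have : (j:ℝ) + 1 ≤ (m:ℝ) := by exact_mod_cast hj
    linarith
  have hJ' : (j':ℝ) ≤ (m:ℝ) - 1 := by
    have : (j':ℝ) + 1 ≤ (m:ℝ) := by exact_mod_cast hj'
    linarith
  simp only [Hbase]
  rcases eq_or_ne j 0 with rfl | h0 <;> rcases eq_or_ne j' 0 with rfl | h0'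
  · omega
  · have h1 : (1:ℝ) ≤ (j':ℝ) := by exact_mod_cast Nat.one_le_iff_ne_zero.mpr h0'
    simp only [if_pos rfl, if_neg h0']
    norm_num
    intro hc
    have : ((j':ℝ)-1)/m < 1 := by
      rw [div_lt_one (by linarith)]; linarith
    linarith
  · have h1 : (1:ℝ) ≤ (j:ℝ) := by exact_mod_cast Nat.one_le_iff_ne_zero.mpr h0
    simp only [if_pos rfl, if_neg h0]
    norm_num
    intro hc
    have : ((j:ℝ)-1)/m < 1 := by
      rw [div_lt_one (by linarith)]; linarith
    linarith
  · simp only [if_neg h0, if_neg h0']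
    intro hc
    have h2 : ((j:ℝ)-1)/m = ((j':ℝ)-1)/m := by linarith
    rw [div_eq_div_iff (by linarith) (by linarith)] at h2
    have h3 : (j:ℝ) = (j':ℝ) := by
      have hmpos : (0:ℝ) < m := by linarith
      nlinarith
    exact h (by exact_mod_cast h3)

lemma Vx_ne {m k k' : ℕ} (hm : 2 ≤ m) (hk : k < m) (hk' : k' < m) (h : k ≠ k') :
    (Vbase m k).1 ≠ (Vbase m k').1 := by
  have hM : (2:ℝ) ≤ (m:ℝ) := by exact_mod_cast hm
  have hmpos : (0:ℝ) < m := by linarith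
  have key : ∀ k : ℕ, k < m → (k = 0 ∧ (Vbase m k).1 = 0) ∨ (k = m - 1 ∧ (Vbase m k).1 = 1 - 1/(m:ℝ)) ∨
      (k ≠ 0 ∧ k ≠ m - 1 ∧ (Vbase m k).1 = ((k:ℝ)-1)/m + 1) := by
    intro k hk
    simp only [Vbase]
    rcases eq_or_ne k 0 with rfl | h0
    · simp
    rcases eq_or_ne k (m-1) with rfl | h1
    · simp [h0]
    · simp [h0, h1]
  have hone : (1:ℝ)/m ≤ 1/2 := by
    rw [div_le_div_iff₀ (by linarith) (by norm_num)]; linarith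
  rcases key k hk with ⟨e1, h1⟩ | ⟨e1, h1⟩ | ⟨e1a, e1b, h1⟩ <;>
    rcases key k' hk' with ⟨e2, h2⟩ | ⟨e2, h2⟩ | ⟨e2a, e2b, h2⟩ <;> rw [h1, h2]
  · omega
  · intro hc; have : (1:ℝ)/m > 0 := by positivity
    linarith
  · intro hc
    have hk1 : (1:ℝ) ≤ (k':ℝ) := by exact_mod_cast Nat.one_le_iff_ne_zero.mpr e2a
    have : (0:ℝ) ≤ ((k':ℝ)-1)/m := div_nonneg (by linarith) (by linarith)
    linarith
  · intro hc; have : (1:ℝ)/m > 0 := by positivity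
    linarith
  · omega
  · intro hc
    have hk1 : (1:ℝ) ≤ (k':ℝ) := by exact_mod_cast Nat.one_le_iff_ne_zero.mpr e2a
    have : (0:ℝ) ≤ ((k':ℝ)-1)/m := div_nonneg (by linarith) (by linarith)
    have : (1:ℝ)/m > 0 := by positivity
    linarith
  · intro hc
    have hk1 : (1:ℝ) ≤ (k:ℝ) := by exact_mod_cast Nat.one_le_iff_ne_zero.mpr e1a
    have : (0:ℝ) ≤ ((k:ℝ)-1)/m := div_nonneg (by linarith) (by linarith)
    linarith
  · intro hc
    have hk1 : (1:ℝ) ≤ (k:ℝ) := by exact_mod_cast Nat.one_le_iff_ne_zero.mpr e1a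
    have : (0:ℝ) ≤ ((k:ℝ)-1)/m := div_nonneg (by linarith) (by linarith)
    have : (1:ℝ)/m > 0 := by positivity
    linarith
  · intro hc
    have h2' : ((k:ℝ)-1)/m = ((k':ℝ)-1)/m := by linarith
    rw [div_eq_div_iff (by linarith) (by linarith)] at h2'
    have h3 : (k:ℝ) = (k':ℝ) := by nlinarith
    exact h (by exact_mod_cast h3)
lemma inter_char {m j k : ℕ} (hm : 2 ≤ m) (hj : j < m) (hk : k < m) :
    (hseg (Hbase m j) ∩ vseg (Vbase m k)).Nonempty ↔
      (j = k ∨ j = k + 1 ∨ (j = 0 ∧ k = m - 1)) := by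
  have hM : (2:ℝ) ≤ (m:ℝ) := by exact_mod_cast hm
  have hMp : (0:ℝ) < (m:ℝ) := by linarith
  have hJ0 : (0:ℝ) ≤ (j:ℝ) := Nat.cast_nonneg j
  have hK0 : (0:ℝ) ≤ (k:ℝ) := Nat.cast_nonneg k
  have hJ1 : (j:ℝ) ≤ (m:ℝ) - 1 := by
    have : (j:ℝ) + 1 ≤ (m:ℝ) := by exact_mod_cast hj
    linarith
  have hK1 : (k:ℝ) ≤ (m:ℝ) - 1 := by
    have : (k:ℝ) + 1 ≤ (m:ℝ) := by exact_mod_cast hk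
    linarith
  rw [hseg_vseg_inter]
  rcases eq_or_ne k 0 with rfl | hk0
  · -- V_0 = (0,0)
    rcases eq_or_ne j 0 with rfl | hj0
    · -- both zero, both sides true
      simp only [Hbase, Vbase, if_pos rfl]
      norm_num
      refine ⟨?_, ?_⟩ <;> (rw [← mul_le_mul_iff_of_pos_right hMp]; field_simp) <;> linarith
    · simp only [Hbase, Vbase, if_pos rfl, if_neg hj0]
      norm_num
      rw [show (j = 0 ∨ j = 1 ∨ j = 0 ∧ 0 = m - 1) ↔ j = 1 from by omega]
      constructor
      · rintro ⟨c1, -, -, -⟩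
        rw [← mul_le_mul_iff_of_pos_right hMp] at c1
        field_simp at c1
        first
        | omega
        | · have h1 : (j:ℝ) ≤ 1 := by linarith
            have h2 : j ≤ 1 := by exact_mod_cast h1
            omega
      · intro h
        subst h
        norm_num
  rcases eq_or_ne k (m-1) with hkm | hkm
  · subst hkm
    rcases eq_or_ne j 0 with rfl | hj0
    · simp only [Hbase, Vbase, if_pos rfl, if_neg hk0]
      norm_num
      refine ⟨?_, ?_, ?_, ?_⟩ <;> (rw [← mul_le_mul_iff_of_pos_right hMp]; field_simp) <;> linarith
    · simp only [Hbase, Vbase, if_neg hj0, if_neg hk0, eq_self_iff_true, if_true, and_true]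
      rw [show (j = m - 1 ∨ j = m - 1 + 1 ∨ j = 0) ↔ j = m - 1 from by omega]
      have h1j : (1:ℝ) ≤ (j:ℝ) := by exact_mod_cast Nat.one_le_iff_ne_zero.mpr hj0
      constructor
      · rintro ⟨-, -, -, c4⟩
        rw [← mul_le_mul_iff_of_pos_right hMp] at c4
        field_simp at c4
        have h1 : (m:ℝ) ≤ (j:ℝ) + 1 := by linarith
        have h2 : m ≤ j + 1 := by exact_mod_cast h1
        omega
      · intro h
        have hjr : (j:ℝ) = (m:ℝ) - 1 := by
          rw [h, Nat.cast_sub (by omega : 1 ≤ m)]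
          norm_num
        rw [hjr]
        refine ⟨?_, ?_, ?_, ?_⟩ <;> (rw [← mul_le_mul_iff_of_pos_right hMp]; field_simp) <;> linarith
  · -- middle k
    rcases eq_or_ne j 0 with rfl | hj0
    · simp only [Hbase, Vbase, if_pos rfl, if_neg hk0, if_neg hkm]
      norm_num
      constructor
      · rintro ⟨-, -, c3, -⟩
        exfalso
        rw [← mul_le_mul_iff_of_pos_right hMp] at c3
        field_simp at c3
        have h1 : (m:ℝ) ≤ (k:ℝ) := by linarith
        have h2 : m ≤ k := by exact_mod_cast h1
        omega
      · intro h
        exact absurd h (by omega)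
    · simp only [Hbase, Vbase, if_neg hj0, if_neg hk0, if_neg hkm]
      rw [show (j = k ∨ j = k + 1 ∨ j = 0 ∧ k = m - 1) ↔ (k ≤ j ∧ j ≤ k + 1) from by omega]
      have h1j : (1:ℝ) ≤ (j:ℝ) := by exact_mod_cast Nat.one_le_iff_ne_zero.mpr hj0
      constructor
      · rintro ⟨-, c2, c3, -⟩
        rw [← mul_le_mul_iff_of_pos_right hMp] at c2 c3
        field_simp at c2 c3
        have r1 : (k:ℝ) ≤ (j:ℝ) := by linarith
        have r2 : (j:ℝ) ≤ (k:ℝ) + 1 := by linarith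
        exact ⟨by exact_mod_cast r1, by exact_mod_cast r2⟩
      · rintro ⟨h1, h2⟩
        have r1 : (k:ℝ) ≤ (j:ℝ) := by exact_mod_cast h1
        have r2 : (j:ℝ) ≤ (k:ℝ) + 1 := by exact_mod_cast h2
        refine ⟨?_, ?_, ?_, ?_⟩ <;> (rw [← mul_le_mul_iff_of_pos_right hMp]; field_simp) <;> linarith

/-- Every even cycle `C_n` with `n ≥ 4` is a unit grid intersection graph, and no odd
cycle is a unit grid intersection graph. -/
theorem stmt3 (n : ℕ) :
    (4 ≤ n → Even n → IsUGIG (SimpleGraph.cycleGraph n)) ∧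
    (3 ≤ n → Odd n → ¬ IsUGIG (SimpleGraph.cycleGraph n)) := by
  constructor
  · intro h4 he
    obtain ⟨m, rfl⟩ : ∃ m, n = 2 * m := by
      obtain ⟨r, hr⟩ := he; exact ⟨r, by omega⟩
    have hm : 2 ≤ m := by omega
    refine ⟨⟨fun v => decide (v.val % 2 = 0),
      fun v => if v.val % 2 = 0 then Hbase m (v.val / 2) else Vbase m (v.val / 2), ?_, ?_⟩⟩
    · -- same orientation disjointness
      intro u v huv hor
      have hne : u.val ≠ v.val := fun hc => huv (Fin.ext hc)
      have hu2 := u.isLt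
      have hv2 := v.isLt
      by_cases hu : u.val % 2 = 0 <;> by_cases hv : v.val % 2 = 0
      · have du : (decide (u.val % 2 = 0)) = true := by simp [hu]
        have dv : (decide (v.val % 2 = 0)) = true := by simp [hv]
        simp only [du, dv, useg_true, if_pos hu, if_pos hv]
        exact hseg_disj (Hy_ne hm (by omega) (by omega) (by omega))
      · exfalso; simp only [hu, hv] at hor; simp at hor
      · exfalso; simp only [hu, hv] at hor; simp at hor
      · have du : (decide (u.val % 2 = 0)) = false := by simp [hu]
        have dv : (decide (v.val % 2 = 0)) = false := by simp [hv]
        simp only [du, dv, useg_false, if_neg hu, if_neg hv]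
        exact vseg_disj (Vx_ne hm (by omega) (by omega) (by omega))
    · -- adjacency iff intersection
      intro u v huv
      have hne : u.val ≠ v.val := fun hc => huv (Fin.ext hc)
      have hu2 := u.isLt
      have hv2 := v.isLt
      rw [cycle_adj_char (by omega)]
      by_cases hu : u.val % 2 = 0 <;> by_cases hv : v.val % 2 = 0
      · have du : (decide (u.val % 2 = 0)) = true := by simp [hu]
        have dv : (decide (v.val % 2 = 0)) = true := by simp [hv]
        simp only [du, dv, useg_true, if_pos hu, if_pos hv]
        have hdis := hseg_disj (Hy_ne hm (m := m) (by omega : u.val / 2 < m)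
          (by omega : v.val / 2 < m) (by omega))
        constructor
        · intro hadj; exfalso; omega
        · intro hint
          exact absurd hint (Set.not_nonempty_iff_eq_empty.mpr hdis.inter_eq)
      · have du : (decide (u.val % 2 = 0)) = true := by simp [hu]
        have dv : (decide (v.val % 2 = 0)) = false := by simp [hv]
        simp only [du, dv, useg_true, useg_false, if_pos hu, if_neg hv]
        rw [inter_char hm (by omega) (by omega)]
        omega
      · have du : (decide (u.val % 2 = 0)) = false := by simp [hu]
        have dv : (decide (v.val % 2 = 0)) = true := by simp [hv]
        simp only [du, dv, useg_true, useg_false, if_neg hu, if_pos hv]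
        rw [Set.inter_comm, inter_char hm (by omega) (by omega)]
        omega
      · have du : (decide (u.val % 2 = 0)) = false := by simp [hu]
        have dv : (decide (v.val % 2 = 0)) = false := by simp [hv]
        simp only [du, dv, useg_false, if_neg hu, if_neg hv]
        have hdis := vseg_disj (Vx_ne hm (m := m) (by omega : u.val / 2 < m)
          (by omega : v.val / 2 < m) (by omega))
        constructor
        · intro hadj; exfalso; omega
        · intro hint
          exact absurd hint (Set.not_nonempty_iff_eq_empty.mpr hdis.inter_eq)
  · intro h3 ho
    rintro ⟨rep⟩
    obtain ⟨p, rfl⟩ : ∃ p, n = p + 3 := ⟨n - 3, by omega⟩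
    set f : Fin (p+3) → Bool := rep.horiz with hf
    have step : ∀ i : Fin (p+3), f (i+1) = ! f i := by
      intro i
      have h10 : (1 : Fin (p+3)) ≠ 0 := by
        simp [Fin.ext_iff]
      have hne : i + 1 ≠ i := by
        intro hc
        have hc' : i + 1 = i + 0 := by rw [add_zero]; exact hc
        exact h10 ((add_right_inj i).mp hc')
      have hadj : (SimpleGraph.cycleGraph (p+3)).Adj (i+1) i := by
        rw [SimpleGraph.cycleGraph_adj]
        left
        rw [add_sub_cancel_left]
      by_contra hcon
      have heq : f (i+1) = f i := by
        cases h1 : f i <;> cases h2 : f (i+1) <;> simp_all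
      have hdis := rep.same_disj (i+1) i hne heq
      have hint := (rep.adj_iff (i+1) i hne).mp hadj
      exact absurd hint (Set.not_nonempty_iff_eq_empty.mpr hdis.inter_eq)
    have key : ∀ j : ℕ, f ((j : Fin (p+3))) = if j % 2 = 0 then f 0 else !(f 0) := by
      intro j
      induction j with
      | zero => simp
      | succ j ih =>
        have hc : ((j+1 : ℕ) : Fin (p+3)) = ((j : ℕ) : Fin (p+3)) + 1 := by push_cast; ring
        rw [hc, step, ih]
        rcases Nat.even_or_odd j with hpar | hpar
        · have h1 : j % 2 = 0 := Nat.even_iff.mp hpar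
          have h2 : (j+1) % 2 = 1 := by omega
          simp [h1, h2]
        · have h1 : j % 2 = 1 := Nat.odd_iff.mp hpar
          have h2 : (j+1) % 2 = 0 := by omega
          simp [h1, h2]
    have hcast : ((p+3 : ℕ) : Fin (p+3)) = 0 := by
      exact_mod_cast Fin.natCast_self (p+3)
    have hodd : (p+3) % 2 = 1 := Nat.odd_iff.mp ho
    have hfin := key (p+3)
    rw [hcast, hodd] at hfin
    simp at hfin
end

section
/- Any unit grid intersection graph on n vertices admits a representation inside the grid square [−1, n] × [−1, n] (i.e., of side length n+1) in which all segment endpoint coordinates are multiples of 1/n, and with respect to each axis no two segments of the same orientation have the same coordinate. -/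
open Set

namespace UGIGaux

open Finset

def Grid (n : ℕ) (x : ℝ) : Prop := ∃ k : ℤ, x = (k : ℝ) / n

lemma Grid.add {n : ℕ} {x y : ℝ} (hx : Grid n x) (hy : Grid n y) : Grid n (x + y) := by
  obtain ⟨k, hk⟩ := hx; obtain ⟨l, hl⟩ := hy
  exact ⟨k + l, by rw [hk, hl]; push_cast; ring⟩

lemma Grid.sub {n : ℕ} {x y : ℝ} (hx : Grid n x) (hy : Grid n y) : Grid n (x - y) := by
  obtain ⟨k, hk⟩ := hx; obtain ⟨l, hl⟩ := hy
  exact ⟨k - l, by rw [hk, hl]; push_cast; ring⟩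

lemma grid_zero (n : ℕ) : Grid n 0 := ⟨0, by simp⟩

lemma grid_one {n : ℕ} (hn : 0 < n) : Grid n 1 :=
  ⟨(n : ℤ), by push_cast; rw [div_self]; exact_mod_cast hn.ne'⟩

lemma Grid.add_one {n : ℕ} {x : ℝ} (hn : 0 < n) (hx : Grid n x) : Grid n (x + 1) :=
  hx.add (grid_one hn)

lemma int_frac_le_iff (a b : ℤ) (s t : ℝ) (hs : 0 ≤ s) (hs1 : s < 1) (ht : 0 ≤ t) (ht1 : t < 1) :
    ((a : ℝ) + s ≤ (b : ℝ) + t) ↔ (a < b ∨ (a = b ∧ s ≤ t)) := by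
  constructor
  · intro h
    rcases lt_trichotomy a b with h1 | h1 | h1
    · exact Or.inl h1
    · exact Or.inr ⟨h1, by rw [h1] at h; linarith⟩
    · exfalso
      have h2 : b + 1 ≤ a := h1
      have : (b : ℝ) + 1 ≤ (a : ℝ) := by exact_mod_cast h2
      linarith
  · rintro (h1 | ⟨h1, h2⟩)
    · have h2 : a + 1 ≤ b := h1
      have : (a : ℝ) + 1 ≤ (b : ℝ) := by exact_mod_cast h2
      linarith
    · rw [h1]; linarith

set_option maxHeartbeats 1000000 in
lemma snap {V : Type*} [Fintype V] (hn : 0 < Fintype.card V) (o : V → Bool) (c : V → ℝ) :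
    ∃ c₂ : V → ℝ,
      (∀ v, Grid (Fintype.card V) (c₂ v)) ∧
      Function.Injective c₂ ∧
      (∀ u v : V, o u = true → o v = false →
        ((c u ≤ c v ↔ c₂ u ≤ c₂ v) ∧ (c v ≤ c u + 1 ↔ c₂ v ≤ c₂ u + 1))) := by
  classical
  set n := Fintype.card V with hncard
  let ι : V ≃ Fin n := Fintype.equivFin V
  let key : V → ℝ ×ₗ (ℝ ×ₗ (Bool ×ₗ ℕ)) :=
    fun v => toLex (Int.fract (c v), toLex (-(c v), toLex (!(o v), (ι v : ℕ))))
  have keylt : ∀ u v : V, key u < key v ↔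
      (Int.fract (c u) < Int.fract (c v) ∨ (Int.fract (c u) = Int.fract (c v) ∧
        (-(c u) < -(c v) ∨ (-(c u) = -(c v) ∧
          ((!(o u)) < (!(o v)) ∨ ((!(o u)) = (!(o v)) ∧ (ι u : ℕ) < (ι v : ℕ))))))) := by
    intro u v
    simp only [key, Prod.Lex.lt_iff, ofLex_toLex]
  have keyinj : Function.Injective key := by
    intro u v huv
    simp only [key, toLex_inj, Prod.mk.injEq] at huv
    have : (ι u : ℕ) = (ι v : ℕ) := huv.2.2.2
    exact ι.injective (Fin.ext this)
  let r : V → ℕ := fun v => (univ.filter fun w => key w < key v).card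
  have rmono : ∀ u v : V, key u < key v → r u < r v := by
    intro u v huv
    apply Finset.card_lt_card
    constructor
    · intro w hw
      simp only [Finset.mem_filter, Finset.mem_univ, true_and] at hw ⊢
      exact lt_trans hw huv
    · intro hsub
      have := hsub (by simpa using huv : u ∈ univ.filter fun w => key w < key v)
      simp at this
  have rinj : ∀ u v : V, r u = r v → u = v := by
    intro u v huv
    rcases lt_trichotomy (key u) (key v) with h | h | h
    · exact absurd huv (Nat.ne_of_lt (rmono u v h))
    · exact keyinj h
    · exact absurd huv.symm (Nat.ne_of_lt (rmono v u h))
  have rlt : ∀ v : V, r v < n := by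
    intro v
    have h1 : (univ.filter fun w => key w < key v) ⊆ univ.erase v := by
      intro w hw
      simp only [Finset.mem_filter, Finset.mem_univ, true_and] at hw
      apply Finset.mem_erase.mpr
      exact ⟨fun hwv => by subst hwv; exact lt_irrefl _ hw, Finset.mem_univ w⟩
    calc r v ≤ (univ.erase v).card := Finset.card_le_card h1
    _ < univ.card := Finset.card_erase_lt_of_mem (Finset.mem_univ v)
  -- the snapped coordinates
  refine ⟨fun v => (⌊c v⌋ : ℝ) + (r v : ℝ) / n, ?_, ?_, ?_⟩
  · intro v
    refine ⟨⌊c v⌋ * n + r v, ?_⟩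
    have hn' : (n : ℝ) ≠ 0 := Nat.cast_ne_zero.mpr hn.ne'
    push_cast
    field_simp
  · -- injectivity
    have hb : ∀ v : V, 0 ≤ (r v : ℝ) / n ∧ (r v : ℝ) / n < 1 := by
      intro v
      constructor
      · positivity
      · rw [div_lt_one (by exact_mod_cast hn)]
        exact_mod_cast rlt v
    intro u v huv
    have h1 := (int_frac_le_iff ⌊c u⌋ ⌊c v⌋ _ _ (hb u).1 (hb u).2 (hb v).1 (hb v).2).mp huv.le
    have h2 := (int_frac_le_iff ⌊c v⌋ ⌊c u⌋ _ _ (hb v).1 (hb v).2 (hb u).1 (hb u).2).mp huv.ge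
    have hfl : ⌊c u⌋ = ⌊c v⌋ := by
      rcases h1 with h | h
      · rcases h2 with h' | h'
        · omega
        · omega
      · exact h.1
    have hr : r u = r v := by
      have hru : (r u : ℝ) / n = (r v : ℝ) / n := by
        have : (⌊c u⌋ : ℝ) = (⌊c v⌋ : ℝ) := by exact_mod_cast hfl
        linarith [huv, this]
      have hn' : (0:ℝ) < n := by exact_mod_cast hn
      field_simp at hru
      exact_mod_cast hru
    exact rinj u v hr
  · -- relation preservation
    intro u v hou hov
    have hb : ∀ w : V, 0 ≤ (r w : ℝ) / n ∧ (r w : ℝ) / n < 1 := by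
      intro w
      constructor
      · positivity
      · rw [div_lt_one (by exact_mod_cast hn)]
        exact_mod_cast rlt w
    have hfr : ∀ w : V, c w = (⌊c w⌋ : ℝ) + Int.fract (c w) := fun w =>
      (Int.floor_add_fract (c w)).symm
    have hfr0 : ∀ w : V, 0 ≤ Int.fract (c w) := fun w => Int.fract_nonneg _
    have hfr1 : ∀ w : V, Int.fract (c w) < 1 := fun w => Int.fract_lt_one _
    constructor
    · -- c u ≤ c v ↔ c₂ u ≤ c₂ v
      have keyfact : ⌊c u⌋ = ⌊c v⌋ → (Int.fract (c u) ≤ Int.fract (c v) ↔ r u ≤ r v) := by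
        intro hfl
        rcases lt_trichotomy (Int.fract (c u)) (Int.fract (c v)) with h | h | h
        · have : r u < r v := rmono u v ((keylt u v).mpr (Or.inl h))
          constructor <;> intro <;> [exact this.le; exact h.le]
        · -- tie: c u = c v, interval before point
          have hcv : c u = c v := by
            rw [hfr u, hfr v, h, hfl]
          have : r u < r v := by
            apply rmono u v
            rw [keylt]
            refine Or.inr ⟨h, Or.inr ⟨by rw [hcv], Or.inl ?_⟩⟩
            rw [hou, hov]
            exact Bool.lt_iff.mpr ⟨rfl, rfl⟩
          constructor <;> intro <;> [exact this.le; exact h.le]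
        · have : r v < r u := rmono v u ((keylt v u).mpr (Or.inl h))
          constructor <;> intro h' <;> [exact absurd h' (not_le.mpr h); exact absurd h' (not_le.mpr this)]
      rw [hfr u, hfr v] -- LHS
      rw [int_frac_le_iff _ _ _ _ (hfr0 u) (hfr1 u) (hfr0 v) (hfr1 v),
          int_frac_le_iff _ _ _ _ (hb u).1 (hb u).2 (hb v).1 (hb v).2]
      constructor
      · rintro (h | ⟨h1, h2⟩)
        · exact Or.inl h
        · refine Or.inr ⟨h1, ?_⟩
          have h3 : r u ≤ r v := (keyfact h1).mp h2
          have hnr : (0:ℝ) < n := by exact_mod_cast hn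
          exact (div_le_div_iff_of_pos_right hnr).mpr (by exact_mod_cast h3)
      · rintro (h | ⟨h1, h2⟩)
        · exact Or.inl h
        · refine Or.inr ⟨h1, ?_⟩
          apply (keyfact h1).mpr
          have hnr : (0:ℝ) < n := by exact_mod_cast hn
          have h3 : (r u : ℝ) ≤ (r v : ℝ) := (div_le_div_iff_of_pos_right hnr).mp h2
          exact_mod_cast h3
    · -- c v ≤ c u + 1 ↔ c₂ v ≤ c₂ u + 1
      have keyfact : ⌊c v⌋ = ⌊c u⌋ + 1 → (Int.fract (c v) ≤ Int.fract (c u) ↔ r v ≤ r u) := by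
        intro hfl
        rcases lt_trichotomy (Int.fract (c v)) (Int.fract (c u)) with h | h | h
        · have : r v < r u := rmono v u ((keylt v u).mpr (Or.inl h))
          constructor <;> intro <;> [exact this.le; exact h.le]
        · -- tie: c v = c u + 1, point before interval
          have hcv : c v = c u + 1 := by
            rw [hfr v, hfr u, h, hfl]
            push_cast
            ring
          have : r v < r u := by
            apply rmono v u
            rw [keylt]
            exact Or.inr ⟨h, Or.inl (by rw [hcv]; linarith)⟩
          constructor <;> intro <;> [exact this.le; exact h.le]
        · have : r u < r v := rmono u v ((keylt u v).mpr (Or.inl h))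
          constructor <;> intro h' <;> [exact absurd h' (not_le.mpr h); exact absurd h' (not_le.mpr this)]
      have expand1 : c u + 1 = ((⌊c u⌋ + 1 : ℤ) : ℝ) + Int.fract (c u) := by
        push_cast
        linarith [hfr u]
      have expand2 : ((⌊c u⌋ : ℝ) + (r u : ℝ) / n) + 1 = ((⌊c u⌋ + 1 : ℤ) : ℝ) + (r u : ℝ) / n := by
        push_cast; ring
      rw [expand1, expand2, hfr v]
      rw [int_frac_le_iff _ _ _ _ (hfr0 v) (hfr1 v) (hfr0 u) (hfr1 u),
          int_frac_le_iff _ _ _ _ (hb v).1 (hb v).2 (hb u).1 (hb u).2]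
      constructor
      · rintro (h | ⟨h1, h2⟩)
        · exact Or.inl h
        · refine Or.inr ⟨h1, ?_⟩
          have h3 : r v ≤ r u := (keyfact h1).mp h2
          have hnr : (0:ℝ) < n := by exact_mod_cast hn
          exact (div_le_div_iff_of_pos_right hnr).mpr (by exact_mod_cast h3)
      · rintro (h | ⟨h1, h2⟩)
        · exact Or.inl h
        · refine Or.inr ⟨h1, ?_⟩
          apply (keyfact h1).mpr
          have hnr : (0:ℝ) < n := by exact_mod_cast hn
          have h3 : (r v : ℝ) ≤ (r u : ℝ) := (div_le_div_iff_of_pos_right hnr).mp h2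
          exact_mod_cast h3

noncomputable def nxt (E : Finset ℝ) (e : ℝ) : ℝ :=
  if h : (E.filter (fun x => e < x)).Nonempty then (E.filter (fun x => e < x)).min' h else e + 1

lemma nxt_lt (E : Finset ℝ) (e : ℝ) : e < nxt E e := by
  rw [nxt]
  split_ifs with h
  · have := Finset.min'_mem _ h
    simp only [Finset.mem_filter] at this
    exact this.2
  · linarith

lemma nxt_le {E : Finset ℝ} {e x : ℝ} (hx : x ∈ E) (hex : e < x) : nxt E e ≤ x := by
  have hne : (E.filter (fun y => e < y)).Nonempty := ⟨x, by simp [hx, hex]⟩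
  rw [nxt, dif_pos hne]
  exact Finset.min'_le _ _ (by simp [hx, hex])

lemma nxt_mem {E : Finset ℝ} {e x : ℝ} (hx : x ∈ E) (hex : e < x) : nxt E e ∈ E := by
  have hne : (E.filter (fun y => e < y)).Nonempty := ⟨x, by simp [hx, hex]⟩
  rw [nxt, dif_pos hne]
  have := Finset.min'_mem _ hne
  simp only [Finset.mem_filter] at this
  exact this.1

/-- `I` is the set of "left endpoints" of unit intervals; gap above `e` is kept if covered
by some interval, else shrunk to `1/n`. -/
noncomputable def gapw (n : ℕ) (E I : Finset ℝ) (e : ℝ) : ℝ :=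
  if ∃ l ∈ I, l ≤ e ∧ nxt E e ≤ l + 1 then nxt E e - e else 1 / n

lemma gapw_pos {n : ℕ} (hn : 0 < n) (E I : Finset ℝ) (e : ℝ) : 0 < gapw n E I e := by
  rw [gapw]
  split_ifs with h
  · linarith [nxt_lt E e]
  · positivity

noncomputable def phi (n : ℕ) (E I : Finset ℝ) (t : ℝ) : ℝ :=
  -1 + ∑ e ∈ E.filter (fun e => e < t), gapw n E I e

lemma phi_mono {n : ℕ} (hn : 0 < n) {E : Finset ℝ} (I : Finset ℝ) {s t : ℝ}
    (hs : s ∈ E) (hst : s < t) : phi n E I s < phi n E I t := by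
  rw [phi, phi]
  have hsub : E.filter (fun e => e < s) ⊆ E.filter (fun e => e < t) := by
    intro x hx
    simp only [Finset.mem_filter] at hx ⊢
    exact ⟨hx.1, hx.2.trans hst⟩
  have h1 : s ∈ E.filter (fun e => e < t) := by simp [hs, hst]
  have h2 : s ∉ E.filter (fun e => e < s) := by simp
  have := Finset.sum_lt_sum_of_subset hsub h1 h2 (gapw_pos hn E I s)
    (fun j _ _ => (gapw_pos hn E I j).le)
  linarith

lemma phi_lower (n : ℕ) (hn : 0 < n) (E I : Finset ℝ) (t : ℝ) : -1 ≤ phi n E I t := by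
  rw [phi]
  have : (0:ℝ) ≤ ∑ e ∈ E.filter (fun e => e < t), gapw n E I e :=
    Finset.sum_nonneg fun e _ => (gapw_pos hn E I e).le
  linarith

lemma phi_grid {n : ℕ} (hn : 0 < n) {E : Finset ℝ} (I : Finset ℝ)
    (hE : ∀ e ∈ E, Grid n e) (t : ℝ) : Grid n (phi n E I t) := by
  rw [phi]
  have hneg : Grid n (-1 : ℝ) := ⟨-(n:ℤ), by push_cast; rw [neg_div, div_self]; exact_mod_cast (Nat.cast_pos.mpr hn).ne'⟩
  refine hneg.add ?_
  apply Finset.sum_induction _ (Grid n) (fun a b ha hb => ha.add hb) (grid_zero n)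
  intro e he
  simp only [Finset.mem_filter] at he
  have heg : Grid n e := hE e he.1
  have hnx : Grid n (nxt E e) := by
    rw [nxt]
    split_ifs with hne
    · have := Finset.min'_mem _ hne
      simp only [Finset.mem_filter] at this
      exact hE _ this.1
    · exact heg.add_one hn
  rw [gapw]
  split_ifs with h
  · exact hnx.sub heg
  · exact ⟨1, by norm_num⟩


lemma phi_unit {n : ℕ} (hn : 0 < n) {E I : Finset ℝ} (hIE : I ⊆ E) {t : ℝ}
    (ht : t ∈ I) (ht1 : t + 1 ∈ E) : phi n E I (t + 1) = phi n E I t + 1 := by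
  classical
  have htE : t ∈ E := hIE ht
  set F := E.filter (fun e => t ≤ e ∧ e < t + 1) with hF
  have hsplit : E.filter (fun e => e < t + 1) = E.filter (fun e => e < t) ∪ F := by
    ext x
    simp only [hF, Finset.mem_filter, Finset.mem_union]
    constructor
    · rintro ⟨hx, hlt⟩
      by_cases h : x < t
      · exact Or.inl ⟨hx, h⟩
      · exact Or.inr ⟨hx, le_of_not_gt h, hlt⟩
    · rintro (⟨hx, h⟩ | ⟨hx, h1, h2⟩)
      · exact ⟨hx, by linarith⟩
      · exact ⟨hx, h2⟩
  have hdisj : Disjoint (E.filter (fun e => e < t)) F := by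
    rw [Finset.disjoint_left]
    intro x hx hx'
    simp only [Finset.mem_filter] at hx
    simp only [hF, Finset.mem_filter] at hx'
    linarith [hx.2, hx'.2.1]
  have hkey : ∑ e ∈ F, gapw n E I e = 1 := by
    -- every gap in [t, t+1) is covered by the interval [t, t+1]
    have hcov : ∀ e ∈ F, gapw n E I e = nxt E e - e := by
      intro e he
      simp only [hF, Finset.mem_filter] at he
      rw [gapw, if_pos]
      exact ⟨t, ht, he.2.1, nxt_le ht1 he.2.2⟩
    rw [Finset.sum_congr rfl hcov]
    rw [Finset.sum_sub_distrib]
    -- the image of `nxt` over F is E ∩ (t, t+1]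
    set G := E.filter (fun g => t < g ∧ g ≤ t + 1) with hG
    have himg : F.image (nxt E) = G := by
      apply Finset.Subset.antisymm
      · intro g hg
        simp only [Finset.mem_image] at hg
        obtain ⟨e, he, rfl⟩ := hg
        simp only [hF, Finset.mem_filter] at he
        simp only [hG, Finset.mem_filter]
        exact ⟨nxt_mem ht1 he.2.2, lt_of_le_of_lt he.2.1 (nxt_lt E e), nxt_le ht1 he.2.2⟩
      · intro g hg
        simp only [hG, Finset.mem_filter] at hg
        obtain ⟨hgE, hgt, hgt1⟩ := hg
        set K := E.filter (fun e => t ≤ e ∧ e < g) with hK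
        have hKne : K.Nonempty := ⟨t, by simp [hK, htE, hgt]⟩
        set e := K.max' hKne with he
        have heK : e ∈ K := Finset.max'_mem _ _
        simp only [hK, Finset.mem_filter] at heK
        have heF : e ∈ F := by
          simp only [hF, Finset.mem_filter]
          exact ⟨heK.1, heK.2.1, lt_of_lt_of_le heK.2.2 hgt1⟩
        have hnxt : nxt E e = g := by
          apply le_antisymm (nxt_le hgE heK.2.2)
          -- g ≤ nxt E e : no element of E strictly between e and g
          have hmem : nxt E e ∈ E := nxt_mem hgE heK.2.2
          by_contra hlt
          push_neg at hlt
          have hx : nxt E e ∈ K := by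
            simp only [hK, Finset.mem_filter]
            exact ⟨hmem, le_trans heK.2.1 (nxt_lt E e).le, hlt⟩
          have := Finset.le_max' K _ hx
          exact absurd this (not_le.mpr (by rw [← he] at *; exact nxt_lt E e))
        rw [Finset.mem_image]
        exact ⟨e, heF, hnxt⟩
    have hinj : ∀ x ∈ F, ∀ y ∈ F, nxt E x = nxt E y → x = y := by
      have haux : ∀ x ∈ F, ∀ y ∈ F, x < y → nxt E x < nxt E y := by
        intro x hx y hy hxy
        simp only [hF, Finset.mem_filter] at hx hy
        exact lt_of_le_of_lt (nxt_le hy.1 hxy) (nxt_lt E y)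
      intro x hx y hy hxy
      rcases lt_trichotomy x y with h | h | h
      · exact absurd hxy (ne_of_lt (haux x hx y hy h))
      · exact h
      · exact absurd hxy.symm (ne_of_lt (haux y hy x hx h))
    have hsum1 : ∑ e ∈ F, nxt E e = ∑ g ∈ G, g := by
      rw [← himg, Finset.sum_image hinj]
    rw [hsum1]
    -- now compare G and F via the middle set M
    set M := E.filter (fun e => t < e ∧ e < t + 1) with hM
    have hFM : F = insert t M := by
      ext x
      simp only [hF, hM, Finset.mem_filter, Finset.mem_insert]
      constructor
      · rintro ⟨hx, h1, h2⟩
        rcases eq_or_lt_of_le h1 with h | h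
        · exact Or.inl h.symm
        · exact Or.inr ⟨hx, h, h2⟩
      · rintro (rfl | ⟨hx, h1, h2⟩)
        · exact ⟨htE, le_refl _, by linarith⟩
        · exact ⟨hx, h1.le, h2⟩
    have hGM : G = insert (t + 1) M := by
      ext x
      simp only [hG, hM, Finset.mem_filter, Finset.mem_insert]
      constructor
      · rintro ⟨hx, h1, h2⟩
        rcases eq_or_lt_of_le h2 with h | h
        · exact Or.inl h
        · exact Or.inr ⟨hx, h1, h⟩
      · rintro (rfl | ⟨hx, h1, h2⟩)
        · exact ⟨ht1, by linarith, le_refl _⟩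
        · exact ⟨hx, h1, h2.le⟩
    have htM : t ∉ M := by simp [hM]
    have ht1M : t + 1 ∉ M := by simp [hM]
    rw [hFM, hGM, Finset.sum_insert htM, Finset.sum_insert ht1M]
    ring
  rw [phi, phi, hsplit, Finset.sum_union hdisj, hkey]
  ring

open MeasureTheory ENNReal in
lemma phi_upper {n : ℕ} (hn : 0 < n) {E I : Finset ℝ}
    (hI1 : ∀ l ∈ I, l + 1 ∈ E) (hcard : (E \ I).card ≤ n) (t : ℝ) :
    phi n E I t ≤ I.card := by
  classical
  rw [phi]
  set S := E.filter (fun e => e < t) with hS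
  set C := S.filter (fun e => ∃ l ∈ I, l ≤ e ∧ nxt E e ≤ l + 1) with hC
  set U := S.filter (fun e => ¬ ∃ l ∈ I, l ≤ e ∧ nxt E e ≤ l + 1) with hU
  have hsplit : ∑ e ∈ S, gapw n E I e
      = ∑ e ∈ C, (nxt E e - e) + ∑ e ∈ U, (1 / n : ℝ) := by
    rw [← Finset.sum_filter_add_sum_filter_not S (fun e => ∃ l ∈ I, l ≤ e ∧ nxt E e ≤ l + 1)]
    congr 1
    · apply Finset.sum_congr rfl
      intro e he
      simp only [hC, Finset.mem_filter] at he
      rw [gapw, if_pos he.2]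
    · apply Finset.sum_congr rfl
      intro e he
      simp only [hU, Finset.mem_filter] at he
      rw [gapw, if_neg he.2]
  -- the uncovered part is at most 1
  have hUsub : U ⊆ E \ I := by
    intro e he
    simp only [hU, hS, Finset.mem_filter] at he
    obtain ⟨⟨heE, _⟩, hnc⟩ := he
    rw [Finset.mem_sdiff]
    refine ⟨heE, fun heI => hnc ⟨e, heI, le_refl e, nxt_le (hI1 e heI) (by linarith)⟩⟩
  have hUbound : ∑ e ∈ U, (1 / n : ℝ) ≤ 1 := by
    rw [Finset.sum_const]
    have h1 : U.card ≤ n := le_trans (Finset.card_le_card hUsub) hcard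
    have hn' : (0:ℝ) < n := by exact_mod_cast hn
    rw [nsmul_eq_mul]
    rw [mul_one_div]
    rw [div_le_one hn']
    exact_mod_cast h1
  -- the covered part is at most I.card, via a measure argument
  have hCbound : ∑ e ∈ C, (nxt E e - e) ≤ I.card := by
    have hCE : ∀ e ∈ C, e ∈ E := by
      intro e he
      simp only [hC, hS, Finset.mem_filter] at he
      exact he.1.1
    have hdisjoint : (↑C : Set ℝ).PairwiseDisjoint (fun e => Set.Ioc e (nxt E e)) := by
      have key : ∀ a b : ℝ, a ∈ C → b ∈ C → a < b →
          Disjoint (Set.Ioc a (nxt E a)) (Set.Ioc b (nxt E b)) := by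
        intro a b ha hb hab
        have h1 : nxt E a ≤ b := nxt_le (hCE b hb) hab
        apply Set.disjoint_left.mpr
        rintro z ⟨hz1, hz2⟩ ⟨hz3, hz4⟩
        linarith
      intro x hx y hy hxy
      rw [Finset.mem_coe] at hx hy
      rcases lt_or_gt_of_ne hxy with h | h
      · exact key x y hx hy h
      · exact (key y x hy hx h).symm
    have h1 : volume (⋃ e ∈ C, Set.Ioc e (nxt E e)) = ∑ e ∈ C, volume (Set.Ioc e (nxt E e)) :=
      measure_biUnion_finset hdisjoint (fun e _ => measurableSet_Ioc)
    have h2 : (⋃ e ∈ C, Set.Ioc e (nxt E e)) ⊆ ⋃ l ∈ I, Set.Ioc l (l + 1) := by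
      intro z hz
      simp only [Set.mem_iUnion] at hz ⊢
      obtain ⟨e, heC, hz1, hz2⟩ := hz
      have he' := heC
      simp only [hC, Finset.mem_filter] at he'
      obtain ⟨-, l, hlI, hle, hnl⟩ := he'
      exact ⟨l, hlI, by linarith, by linarith⟩
    have h3 : volume (⋃ l ∈ I, Set.Ioc l (l + 1)) ≤ ∑ l ∈ I, volume (Set.Ioc l (l + 1)) :=
      measure_biUnion_finset_le _ _
    have h4 : ∑ e ∈ C, volume (Set.Ioc e (nxt E e)) ≤ (I.card : ENNReal) := by
      calc ∑ e ∈ C, volume (Set.Ioc e (nxt E e))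
          = volume (⋃ e ∈ C, Set.Ioc e (nxt E e)) := h1.symm
        _ ≤ volume (⋃ l ∈ I, Set.Ioc l (l + 1)) := measure_mono h2
        _ ≤ ∑ l ∈ I, volume (Set.Ioc l (l + 1)) := h3
        _ = (I.card : ENNReal) := by
            simp [Real.volume_Ioc]
    have h5 : ENNReal.ofReal (∑ e ∈ C, (nxt E e - e)) ≤ ENNReal.ofReal (I.card : ℝ) := by
      rw [ENNReal.ofReal_sum_of_nonneg (fun e _ => by linarith [nxt_lt E e])]
      calc ∑ e ∈ C, ENNReal.ofReal (nxt E e - e)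
          = ∑ e ∈ C, volume (Set.Ioc e (nxt E e)) := by
            apply Finset.sum_congr rfl
            intro e _
            rw [Real.volume_Ioc]
        _ ≤ (I.card : ENNReal) := h4
        _ = ENNReal.ofReal (I.card : ℝ) := by
            rw [ENNReal.ofReal_natCast]
    have h6 := (ENNReal.ofReal_le_ofReal_iff (by positivity)).mp h5
    exact h6
  have := hsplit
  have hfinal : ∑ e ∈ S, gapw n E I e ≤ I.card + 1 := by
    rw [hsplit]; linarith
  linarith

lemma compress {V : Type*} [Fintype V] (hn : 0 < Fintype.card V) (o : V → Bool) (c : V → ℝ)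
    (hgrid : ∀ v, Grid (Fintype.card V) (c v)) :
    ∃ c' : V → ℝ,
      (∀ v, Grid (Fintype.card V) (c' v)) ∧
      (∀ u v : V, c u ≤ c v ↔ c' u ≤ c' v) ∧
      (∀ u v : V, o u = true → (c v ≤ c u + 1 ↔ c' v ≤ c' u + 1)) ∧
      (∀ v, -1 ≤ c' v) ∧ (∀ v, c' v ≤ Fintype.card V) ∧
      (∀ u, o u = true → c' u ≤ (Fintype.card V : ℝ) - 1) := by
  classical
  set n := Fintype.card V with hn'
  set I : Finset ℝ := (univ.filter (fun u => o u = true)).image c with hI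
  set E : Finset ℝ := univ.image c ∪ I.image (fun x => x + 1) with hE
  have hcE : ∀ v, c v ∈ E := fun v =>
    Finset.mem_union_left _ (Finset.mem_image_of_mem c (Finset.mem_univ v))
  have hIE : I ⊆ E := by
    intro l hl
    simp only [hI, Finset.mem_image, Finset.mem_filter] at hl
    obtain ⟨u, _, rfl⟩ := hl
    exact hcE u
  have hIc : ∀ u, o u = true → c u ∈ I := by
    intro u hu
    simp only [hI, Finset.mem_image, Finset.mem_filter]
    exact ⟨u, ⟨Finset.mem_univ u, hu⟩, rfl⟩
  have hI1 : ∀ l ∈ I, l + 1 ∈ E := by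
    intro l hl
    exact Finset.mem_union_right _ (Finset.mem_image_of_mem _ hl)
  have hEgrid : ∀ e ∈ E, Grid n e := by
    intro e he
    rw [hE, Finset.mem_union] at he
    rcases he with he | he
    · simp only [Finset.mem_image] at he
      obtain ⟨v, _, rfl⟩ := he
      exact hgrid v
    · simp only [Finset.mem_image] at he
      obtain ⟨l, hl, rfl⟩ := he
      simp only [hI, Finset.mem_image, Finset.mem_filter] at hl
      obtain ⟨u, _, rfl⟩ := hl
      exact (hgrid u).add_one hn
  have hcard : (E \ I).card ≤ n := by
    have hsub : E \ I ⊆ ((univ.filter (fun v => o v = false)).image c) ∪ I.image (fun x => x + 1) := by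
      intro e he
      rw [Finset.mem_sdiff] at he
      obtain ⟨heE, heI⟩ := he
      rw [hE, Finset.mem_union] at heE
      rcases heE with he | he
      · simp only [Finset.mem_image] at he
        obtain ⟨v, _, rfl⟩ := he
        rcases Bool.eq_false_or_eq_true (o v) with hv | hv
        · exact absurd (hIc v hv) heI
        · exact Finset.mem_union_left _
            (Finset.mem_image_of_mem c (by simp [hv]))
      · exact Finset.mem_union_right _ he
    calc (E \ I).card ≤ _ := Finset.card_le_card hsub
      _ ≤ ((univ.filter (fun v => o v = false)).image c).card + (I.image (fun x => x + 1)).card :=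
          Finset.card_union_le _ _
      _ ≤ (univ.filter (fun v => o v = false)).card + (univ.filter (fun u => o u = true)).card := by
          gcongr
          · exact Finset.card_image_le
          · exact le_trans Finset.card_image_le Finset.card_image_le
      _ = n := by
          have h3 : (univ.filter (fun v => o v = false)) = (univ.filter (fun v => ¬ o v = true)) :=
            Finset.filter_congr (by intro x _; simp)
          rw [add_comm, h3, Finset.card_filter_add_card_filter_not, Finset.card_univ]
  have hIcard : (I.card : ℝ) ≤ n := by
    have : I.card ≤ (univ.filter (fun u => o u = true)).card := Finset.card_image_le
    have h2 : (univ.filter (fun u => o u = true)).card ≤ n := by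
      apply le_trans (Finset.card_le_card (Finset.filter_subset _ _))
      simp [hn']
    exact_mod_cast le_trans this h2
  refine ⟨fun v => phi n E I (c v), fun v => phi_grid hn I hEgrid (c v), ?_, ?_, ?_, ?_, ?_⟩
  · -- order iff
    intro u v
    constructor
    · intro huv
      rcases eq_or_lt_of_le huv with h | h
      · exact le_of_eq (by simp [h])
      · exact (phi_mono hn I (hcE u) h).le
    · intro huv
      by_contra h
      push_neg at h
      exact absurd huv (not_le.mpr (phi_mono hn I (hcE v) h))
  · -- +1 iff
    intro u v hu
    have hunit : phi n E I (c u + 1) = phi n E I (c u) + 1 :=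
      phi_unit hn hIE (hIc u hu) (hI1 _ (hIc u hu))
    rw [← hunit]
    constructor
    · intro huv
      rcases eq_or_lt_of_le huv with h | h
      · exact le_of_eq (by simp [h])
      · exact (phi_mono hn I (hcE v) h).le
    · intro huv
      by_contra h
      push_neg at h
      exact absurd huv (not_le.mpr (phi_mono hn I (hI1 _ (hIc u hu)) h))
  · exact fun v => phi_lower n hn E I (c v)
  · intro v
    exact le_trans (phi_upper hn hI1 hcard (c v)) hIcard
  · intro u hu
    have hunit : phi n E I (c u + 1) = phi n E I (c u) + 1 :=
      phi_unit hn hIE (hIc u hu) (hI1 _ (hIc u hu))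
    have := le_trans (phi_upper hn hI1 hcard (c u + 1)) hIcard
    linarith

lemma axis {V : Type*} [Fintype V] (hn : 0 < Fintype.card V) (o : V → Bool) (c : V → ℝ) :
    ∃ c' : V → ℝ,
      (∀ v, Grid (Fintype.card V) (c' v)) ∧
      (∀ u v : V, o u = true → o v = false →
        ((c u ≤ c v ∧ c v ≤ c u + 1) ↔ (c' u ≤ c' v ∧ c' v ≤ c' u + 1))) ∧
      Function.Injective c' ∧
      (∀ v, -1 ≤ c' v) ∧ (∀ v, c' v ≤ Fintype.card V) ∧
      (∀ u, o u = true → c' u ≤ (Fintype.card V : ℝ) - 1) := by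
  obtain ⟨c₂, hg2, hinj2, hrel2⟩ := snap hn o c
  obtain ⟨c', hg, hord, hord1, hlow, hup, hupI⟩ := compress hn o c₂ hg2
  refine ⟨c', hg, ?_, ?_, hlow, hup, hupI⟩
  · intro u v hou hov
    rw [(hrel2 u v hou hov).1, (hrel2 u v hou hov).2, hord u v, hord1 u v hou]
  · intro u v huv
    apply hinj2
    exact le_antisymm ((hord u v).mpr huv.le) ((hord v u).mpr huv.ge)


lemma useg_true (p : ℝ × ℝ) : useg true p = hseg p := rfl
lemma useg_false (p : ℝ × ℝ) : useg false p = vseg p := rfl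

lemma hseg_vseg_inter (p q : ℝ × ℝ) :
    (hseg p ∩ vseg q).Nonempty ↔
      ((p.1 ≤ q.1 ∧ q.1 ≤ p.1 + 1) ∧ (q.2 ≤ p.2 ∧ p.2 ≤ q.2 + 1)) := by
  constructor
  · rintro ⟨z, hz1, hz2⟩
    simp only [hseg, vseg, Set.mem_setOf_eq, Set.mem_Icc] at hz1 hz2
    obtain ⟨he1, he2, he3⟩ := hz1
    obtain ⟨hf1, hf2, hf3⟩ := hz2
    rw [hf1] at he2 he3
    rw [he1] at hf2 hf3
    exact ⟨⟨he2, he3⟩, hf2, hf3⟩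
  · rintro ⟨⟨h1, h2⟩, h3, h4⟩
    exact ⟨(q.1, p.2), ⟨rfl, h1, h2⟩, ⟨rfl, h3, h4⟩⟩

lemma hseg_disj {p q : ℝ × ℝ} (h : p.2 ≠ q.2) : Disjoint (hseg p) (hseg q) := by
  rw [Set.disjoint_left]
  rintro z hz hw
  simp only [hseg, Set.mem_setOf_eq] at hz hw
  exact h (hz.1 ▸ hw.1 ▸ rfl)

lemma vseg_disj {p q : ℝ × ℝ} (h : p.1 ≠ q.1) : Disjoint (vseg p) (vseg q) := by
  rw [Set.disjoint_left]
  rintro z hz hw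
  simp only [vseg, Set.mem_setOf_eq] at hz hw
  exact h (hz.1 ▸ hw.1 ▸ rfl)

end UGIGaux

/-- Any unit grid intersection graph on `n` vertices admits a representation inside the
square `[-1, n] × [-1, n]` with all endpoint coordinates multiples of `1/n`, in which no
two segments of the same orientation share their line coordinate. -/
theorem stmt5 {V : Type*} [Fintype V] (G : SimpleGraph V) (h : IsUGIG G) :
    ∃ R : UGIGRep G,
      (∀ v : V, (∃ k : ℤ, (R.base v).1 = (k : ℝ) / (Fintype.card V : ℝ)) ∧
                 (∃ k : ℤ, (R.base v).2 = (k : ℝ) / (Fintype.card V : ℝ))) ∧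
      (∀ v : V, useg (R.horiz v) (R.base v) ⊆
        Set.Icc (-1 : ℝ) (Fintype.card V : ℝ) ×ˢ Set.Icc (-1 : ℝ) (Fintype.card V : ℝ)) ∧
      (∀ u v : V, u ≠ v → R.horiz u = R.horiz v →
        (R.horiz u = true → (R.base u).2 ≠ (R.base v).2) ∧
        (R.horiz u = false → (R.base u).1 ≠ (R.base v).1)) := by
  classical
  obtain ⟨R⟩ := h
  rcases Nat.eq_zero_or_pos (Fintype.card V) with hn | hn
  · have hemp : IsEmpty V := Fintype.card_eq_zero_iff.mp hn
    exact ⟨R, fun v => (hemp.false v).elim, fun v => (hemp.false v).elim,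
      fun u v _ _ => (hemp.false u).elim⟩
  obtain ⟨cx, hgx, hrelx, hinjx, hlowx, hupx, hupIx⟩ :=
    UGIGaux.axis hn R.horiz (fun v => (R.base v).1)
  obtain ⟨cy, hgy, hrely, hinjy, hlowy, hupy, hupIy⟩ :=
    UGIGaux.axis hn (fun v => !R.horiz v) (fun v => (R.base v).2)
  set nb : V → ℝ × ℝ := fun v => (cx v, cy v) with hnb
  have hdisjnew : ∀ u v : V, u ≠ v → R.horiz u = R.horiz v →
      Disjoint (useg (R.horiz u) (nb u)) (useg (R.horiz v) (nb v)) := by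
    intro u v huv heq
    have hbv := heq.symm
    rcases Bool.eq_false_or_eq_true (R.horiz u) with hb | hb <;>
      rw [hb] at hbv <;> rw [hb, hbv]
    · rw [UGIGaux.useg_true, UGIGaux.useg_true]
      exact UGIGaux.hseg_disj (fun hc => huv (hinjy hc))
    · rw [UGIGaux.useg_false, UGIGaux.useg_false]
      exact UGIGaux.vseg_disj (fun hc => huv (hinjx hc))
  have key : ∀ u v : V, u ≠ v → R.horiz u = true → R.horiz v = false →
      (G.Adj u v ↔ (useg (R.horiz u) (nb u) ∩ useg (R.horiz v) (nb v)).Nonempty) := by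
    intro u v huv hu hv
    rw [R.adj_iff u v huv, hu, hv, UGIGaux.useg_true, UGIGaux.useg_true,
      UGIGaux.useg_false, UGIGaux.useg_false,
      UGIGaux.hseg_vseg_inter, UGIGaux.hseg_vseg_inter]
    have hx := hrelx u v hu hv
    have hy := hrely v u (by rw [hv]; rfl) (by rw [hu]; rfl)
    constructor
    · rintro ⟨h1, h2⟩
      exact ⟨hx.mp h1, hy.mp h2⟩
    · rintro ⟨h1, h2⟩
      exact ⟨hx.mpr h1, hy.mpr h2⟩
  refine ⟨⟨R.horiz, nb, hdisjnew, ?_⟩, ?_, ?_, ?_⟩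
  · -- adjacency
    intro u v huv
    by_cases hsame : R.horiz u = R.horiz v
    · constructor
      · intro ha
        exact absurd ((R.adj_iff u v huv).mp ha)
          (Set.not_nonempty_iff_eq_empty.mpr ((R.same_disj u v huv hsame).inter_eq))
      · intro hne
        exact absurd hne
          (Set.not_nonempty_iff_eq_empty.mpr ((hdisjnew u v huv hsame).inter_eq))
    · rcases Bool.eq_false_or_eq_true (R.horiz u) with hb | hb
      · have hv : R.horiz v = false := by
          rcases Bool.eq_false_or_eq_true (R.horiz v) with hc | hc
          · exact absurd (hb.trans hc.symm) hsame
          · exact hc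
        exact key u v huv hb hv
      · have hv : R.horiz v = true := by
          rcases Bool.eq_false_or_eq_true (R.horiz v) with hc | hc
          · exact hc
          · exact absurd (hb.trans hc.symm) hsame
        rw [G.adj_comm, Set.inter_comm]
        exact key v u (Ne.symm huv) hv hb
  · -- grid coordinates
    intro v
    exact ⟨hgx v, hgy v⟩
  · -- containment in the square
    intro v z hz
    rcases Bool.eq_false_or_eq_true (R.horiz v) with hb | hb <;> rw [hb] at hz
    · rw [UGIGaux.useg_true] at hz
      simp only [hseg, Set.mem_setOf_eq, Set.mem_Icc] at hz
      obtain ⟨h1, h2, h3⟩ := hz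
      have h1' : z.2 = cy v := h1
      have h2' : cx v ≤ z.1 := h2
      have h3' : z.1 ≤ cx v + 1 := h3
      have hxb := hupIx v hb
      refine ⟨⟨?_, ?_⟩, ?_, ?_⟩
      · linarith [hlowx v]
      · linarith
      · rw [h1']; exact hlowy v
      · rw [h1']; exact hupy v
    · rw [UGIGaux.useg_false] at hz
      simp only [vseg, Set.mem_setOf_eq, Set.mem_Icc] at hz
      obtain ⟨h1, h2, h3⟩ := hz
      have h1' : z.1 = cx v := h1
      have h2' : cy v ≤ z.2 := h2
      have h3' : z.2 ≤ cy v + 1 := h3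
      have hyb : cy v ≤ (Fintype.card V : ℝ) - 1 := hupIy v (by rw [hb]; rfl)
      refine ⟨⟨?_, ?_⟩, ?_, ?_⟩
      · rw [h1']; exact hlowx v
      · rw [h1']; exact hupx v
      · linarith [hlowy v]
      · linarith
  · -- distinct line coordinates
    intro u v huv _
    constructor
    · intro _
      exact fun hc => huv (hinjy hc)
    · intro _
      exact fun hc => huv (hinjx hc)
end
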